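/- Let T be a finite rooted tree and let S ⊆ V(T) be a nonempty set of nodes. Then the least-common-ancestor closure of S, i.e., the smallest set M with S ⊆ M ⊆ V(T) such that the least common ancestor of any two nodes of M belongs to M, satisfies |M| ≤ 2|S|. -/

import Mathlib

/-- In a tree `T` rooted at `root`, `u` is an ancestor of `v` if `u` lies on every
(equivalently, by uniqueness of paths in a tree, on the) path from `root` to `v`.
Every node is an ancestor of itself. -/
def IsAncestor {V : Type*} (T : SimpleGraph V) (root u v : V) : Prop :=
  ∀ p : T.Walk root v, p.IsPath → u ∈ p.support

/-- In a tree `T` rooted at `root`, `m` is the least common ancestor of `u` and `v` if it is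
a common ancestor of `u` and `v` of greatest depth (depth being the distance from the root). -/
def IsLCA {V : Type*} (T : SimpleGraph V) (root u v m : V) : Prop :=
  IsAncestor T root m u ∧ IsAncestor T root m v ∧
    ∀ w : V, IsAncestor T root w u → IsAncestor T root w v →
      T.dist root w ≤ T.dist root m

namespace LCAHelper

open SimpleGraph

variable {V : Type*} [DecidableEq V] {T : SimpleGraph V}

/-- The unique path from `root` to `v`. -/
noncomputable def pth (hT : T.IsTree) (root v : V) : T.Walk root v :=
  (hT.existsUnique_path root v).exists.choose

lemma pth_isPath (hT : T.IsTree) (root v : V) : (pth hT root v).IsPath :=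
  (hT.existsUnique_path root v).exists.choose_spec

lemma pth_unique (hT : T.IsTree) {root v : V} (p : T.Walk root v) (hp : p.IsPath) :
    p = pth hT root v :=
  (hT.existsUnique_path root v).unique hp (pth_isPath hT root v)

/-- `anc u v` : u is an ancestor of v. -/
def anc (hT : T.IsTree) (root u v : V) : Prop := u ∈ (pth hT root v).support

lemma isAncestor_iff (hT : T.IsTree) {root u v : V} :
    IsAncestor T root u v ↔ anc hT root u v := by
  constructor
  · intro h; exact h _ (pth_isPath hT root v)
  · intro h p hp; rw [pth_unique hT p hp]; exact h

lemma anc_self (hT : T.IsTree) (root v : V) : anc hT root v v :=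
  Walk.end_mem_support _

lemma anc_root (hT : T.IsTree) (root v : V) : anc hT root root v :=
  Walk.start_mem_support _

lemma dist_eq_length (hT : T.IsTree) (root v : V) :
    T.dist root v = (pth hT root v).length := by
  obtain ⟨p, hp, hl⟩ := (hT.isConnected root v).exists_path_of_dist
  rw [← hl, pth_unique hT p hp]

lemma takeUntil_eq (hT : T.IsTree) {root u v : V} (h : anc hT root u v) :
    (pth hT root v).takeUntil u h = pth hT root u :=
  pth_unique hT _ ((pth_isPath hT root v).takeUntil h)

lemma anc_trans (hT : T.IsTree) {root u w v : V} (h1 : anc hT root u w)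
    (h2 : anc hT root w v) : anc hT root u v := by
  have := Walk.support_takeUntil_subset (pth hT root v) h2
  rw [takeUntil_eq hT h2] at this
  exact this h1

lemma depth_le (hT : T.IsTree) {root u v : V} (h : anc hT root u v) :
    T.dist root u ≤ T.dist root v := by
  rw [dist_eq_length hT, dist_eq_length hT, ← takeUntil_eq hT h]
  exact Walk.length_takeUntil_le _ h

lemma anc_antisymm (hT : T.IsTree) {root u v : V} (h : anc hT root u v)
    (hd : T.dist root v ≤ T.dist root u) : u = v := by
  have htk : ((pth hT root v).takeUntil u h).length = (pth hT root u).length := by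
    rw [takeUntil_eq hT h]
  have hle : (pth hT root u).length ≤ (pth hT root v).length := by
    have := depth_le hT h
    rw [dist_eq_length hT, dist_eq_length hT] at this
    exact this
  have hge : (pth hT root v).length ≤ (pth hT root u).length := by
    rw [← dist_eq_length hT, ← dist_eq_length hT]
    exact hd
  have hspec := Walk.take_spec (pth hT root v) h
  have hlen := congrArg Walk.length hspec
  rw [Walk.length_append] at hlen
  have h0 : ((pth hT root v).dropUntil u h).length = 0 := by omega
  exact Walk.eq_of_length_eq_zero h0

/-- Ancestors of a vertex form a chain. -/
lemma anc_chain (hT : T.IsTree) {root u w v : V} (hu : anc hT root u v)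
    (hw : anc hT root w v) : anc hT root u w ∨ anc hT root w u := by
  classical
  set p := pth hT root v with hp
  have hu' : u ∈ ((p.takeUntil w hw).append (p.dropUntil w hw)).support := by
    rw [Walk.take_spec p hw]; exact hu
  rw [Walk.mem_support_append_iff] at hu'
  rcases hu' with h | h
  · left; rw [anc, ← takeUntil_eq hT hw]; exact h
  · right
    -- build the path root → w → u
    set q := p.dropUntil w hw with hq
    have hqp : q.IsPath := (pth_isPath hT root v).dropUntil hw
    set W := (p.takeUntil w hw).append (q.takeUntil u h) with hW
    have hWpath : W.IsPath := by
      rw [Walk.isPath_def, hW, Walk.support_append, List.nodup_append]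
      refine ⟨((pth_isPath hT root v).takeUntil hw).support_nodup, ?_, ?_⟩
      · exact List.Nodup.sublist (List.tail_sublist _) (hqp.takeUntil h).support_nodup
      · -- disjointness
        intro x hx1 y hx2 hxy; subst hxy
        have hpnodup : p.support.Nodup := (pth_isPath hT root v).support_nodup
        have hsplit : p.support = (p.takeUntil w hw).support ++ q.support.tail := by
          rw [← Walk.support_append, hq, Walk.take_spec p hw]
        rw [hsplit, List.nodup_append] at hpnodup
        refine hpnodup.2.2 x hx1 x ?_ rfl
        -- x ∈ tail of (q.takeUntil u h).support ⇒ x ∈ q.support.tail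
        have hxq : x ∈ (q.takeUntil u h).support := List.mem_of_mem_tail hx2
        have hxq' : x ∈ q.support := Walk.support_takeUntil_subset _ _ hxq
        have hwnot : w ∉ (q.takeUntil u h).support.tail := by
          have hcons : (q.takeUntil u h).support
              = w :: (q.takeUntil u h).support.tail := Walk.support_eq_cons _
          have hnd := (hqp.takeUntil h).support_nodup
          rw [hcons, List.nodup_cons] at hnd
          exact hnd.1
        have hxne : x ≠ w := fun hxw => hwnot (hxw ▸ hx2)
        have hqcons : q.support = w :: q.support.tail := Walk.support_eq_cons _
        rw [hqcons] at hxq'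
        rcases List.mem_cons.mp hxq' with h' | h'
        · exact absurd h' hxne
        · exact h'
    have hWmem : w ∈ W.support := by
      rw [hW, Walk.mem_support_append_iff]
      exact Or.inl (Walk.end_mem_support _)
    rw [anc, ← pth_unique hT W hWpath]
    exact hWmem

section LCA

variable [Fintype V]

open Classical in
/-- A deepest common ancestor of `u` and `v`. -/
noncomputable def lca (hT : T.IsTree) (root u v : V) : V :=
  (Finset.exists_max_image
    (Finset.univ.filter (fun w => anc hT root w u ∧ anc hT root w v))
    (fun w => T.dist root w)
    ⟨root, by simp [anc_root]⟩).choose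

lemma lca_spec (hT : T.IsTree) (root u v : V) :
    (anc hT root (lca hT root u v) u ∧ anc hT root (lca hT root u v) v) ∧
      ∀ w : V, anc hT root w u → anc hT root w v →
        T.dist root w ≤ T.dist root (lca hT root u v) := by
  classical
  obtain ⟨hb, hmax⟩ := (Finset.exists_max_image
    (Finset.univ.filter (fun w => anc hT root w u ∧ anc hT root w v))
    (fun w => T.dist root w)
    ⟨root, by simp [anc_root]⟩).choose_spec
  rw [Finset.mem_filter] at hb
  refine ⟨hb.2, fun w h1 h2 => hmax w ?_⟩
  rw [Finset.mem_filter]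
  exact ⟨Finset.mem_univ _, h1, h2⟩

lemma isLCA_lca (hT : T.IsTree) (root u v : V) : IsLCA T root u v (lca hT root u v) := by
  obtain ⟨⟨h1, h2⟩, h3⟩ := lca_spec hT root u v
  exact ⟨(isAncestor_iff hT).2 h1, (isAncestor_iff hT).2 h2,
    fun w hw1 hw2 => h3 w ((isAncestor_iff hT).1 hw1) ((isAncestor_iff hT).1 hw2)⟩

lemma lca_anc_left (hT : T.IsTree) (root u v : V) : anc hT root (lca hT root u v) u :=
  (lca_spec hT root u v).1.1

lemma lca_anc_right (hT : T.IsTree) (root u v : V) : anc hT root (lca hT root u v) v :=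
  (lca_spec hT root u v).1.2

lemma lca_max (hT : T.IsTree) {root u v w : V} (h1 : anc hT root w u)
    (h2 : anc hT root w v) : T.dist root w ≤ T.dist root (lca hT root u v) :=
  (lca_spec hT root u v).2 w h1 h2

/-- Uniqueness of the LCA. -/
lemma isLCA_eq (hT : T.IsTree) {root u v m : V} (h : IsLCA T root u v m) :
    m = lca hT root u v := by
  obtain ⟨h1, h2, h3⟩ := h
  rw [isAncestor_iff hT] at h1 h2
  have hle : T.dist root m ≤ T.dist root (lca hT root u v) := lca_max hT h1 h2
  have hge : T.dist root (lca hT root u v) ≤ T.dist root m :=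
    h3 _ ((isAncestor_iff hT).2 (lca_anc_left hT root u v))
      ((isAncestor_iff hT).2 (lca_anc_right hT root u v))
  rcases anc_chain hT h1 (lca_anc_left hT root u v) with h | h
  · exact anc_antisymm hT h hge
  · exact (anc_antisymm hT h hle).symm

lemma lca_self (hT : T.IsTree) (root u : V) : lca hT root u u = u :=
  (isLCA_eq hT ⟨(isAncestor_iff hT).2 (anc_self hT root u),
    (isAncestor_iff hT).2 (anc_self hT root u),
    fun w hw _ => depth_le hT ((isAncestor_iff hT).1 hw)⟩).symm

lemma lca_of_anc (hT : T.IsTree) {root u v : V} (h : anc hT root v u) :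
    lca hT root u v = v :=
  (isLCA_eq hT ⟨(isAncestor_iff hT).2 h,
    (isAncestor_iff hT).2 (anc_self hT root v),
    fun w _ hw => depth_le hT ((isAncestor_iff hT).1 hw)⟩).symm

lemma lca_comm (hT : T.IsTree) (root u v : V) : lca hT root u v = lca hT root v u :=
  isLCA_eq hT ⟨(isAncestor_iff hT).2 (lca_anc_right hT root u v),
    (isAncestor_iff hT).2 (lca_anc_left hT root u v),
    fun w hw1 hw2 => lca_max hT ((isAncestor_iff hT).1 hw2) ((isAncestor_iff hT).1 hw1)⟩

end LCA

end LCAHelper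

open LCAHelper in
/-- Let `T` be a finite rooted tree and `S` a nonempty set of nodes.  Then the least common
ancestor closure of `S`, i.e. the smallest set `M` with `S ⊆ M ⊆ V(T)` closed under taking
least common ancestors of pairs of its elements, has size at most `2|S|`. -/
theorem lca_closure_card_le {V : Type*} [Fintype V]
    (T : SimpleGraph V) (hT : T.IsTree) (root : V)
    (S : Set V) (hS : S.Nonempty)
    (M : Set V) (hSM : S ⊆ M)
    (hclosed : ∀ u ∈ M, ∀ v ∈ M, ∀ m : V, IsLCA T root u v m → m ∈ M)
    (hmin : ∀ M' : Set V, S ⊆ M' →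
      (∀ u ∈ M', ∀ v ∈ M', ∀ m : V, IsLCA T root u v m → m ∈ M') → M ⊆ M') :
    M.ncard ≤ 2 * S.ncard := by
  classical
  -- key lemma: every nonempty finset has a closed superset of size ≤ 2|S| - 1
  have key : ∀ S' : Finset V, S'.Nonempty → ∃ M' : Finset V,
      S' ⊆ M' ∧ (∀ u ∈ M', ∀ v ∈ M', ∀ m : V, IsLCA T root u v m → m ∈ M') ∧
      M'.card + 1 ≤ 2 * S'.card := by
    intro S' hS'
    induction hS' using Finset.Nonempty.cons_induction with
    | singleton a =>
      refine ⟨{a}, Finset.Subset.refl _, ?_, by simp⟩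
      intro u hu v hv m hm
      simp only [Finset.mem_singleton] at hu hv ⊢
      subst hu; subst hv
      rw [isLCA_eq hT hm, lca_self hT]
    | cons a S₀ ha hS₀ ih =>
      obtain ⟨M', hsub, hcl, hcard⟩ := ih
      have hM'ne : M'.Nonempty := hS₀.mono hsub
      -- pick x₀ ∈ M' maximizing depth of lca a x₀
      obtain ⟨x₀, hx₀, hx₀max⟩ := Finset.exists_max_image M'
        (fun x => T.dist root (lca hT root a x)) hM'ne
      set b := lca hT root a x₀ with hb
      have hba : anc hT root b a := lca_anc_left hT root a x₀
      have hbx : anc hT root b x₀ := lca_anc_right hT root a x₀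
      -- core lemma
      have core : ∀ v ∈ M', lca hT root a v ∈ insert b M' ∧
          lca hT root b v = lca hT root a v := by
        intro v hv
        set c := lca hT root a v with hc
        have hca : anc hT root c a := lca_anc_left hT root a v
        have hcv : anc hT root c v := lca_anc_right hT root a v
        have hcb_depth : T.dist root c ≤ T.dist root b := hx₀max v hv
        -- c is an ancestor of b
        have hcb : anc hT root c b := by
          rcases anc_chain hT hca hba with h | h
          · exact h
          · rw [anc_antisymm hT h hcb_depth]; exact anc_self hT root c
        have main : c ∈ insert b M' := by
          by_cases hceq : c = b
          · simp [hceq]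
          · have hlt : T.dist root c < T.dist root b :=
              lt_of_le_of_ne hcb_depth (fun he => hceq (anc_antisymm hT hcb he.ge))
            -- show c = lca x₀ v ∈ M'
            have hcx₀ : anc hT root c x₀ := anc_trans hT hcb hbx
            have : IsLCA T root x₀ v c := by
              refine ⟨(isAncestor_iff hT).2 hcx₀, (isAncestor_iff hT).2 hcv, ?_⟩
              intro w hw1 hw2
              rw [isAncestor_iff hT] at hw1 hw2
              rcases anc_chain hT hw1 hbx with h | h
              · exact lca_max hT (anc_trans hT h hba) hw2
              · exfalso
                have hbv : anc hT root b v := anc_trans hT h hw2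
                have := lca_max hT hba hbv
                rw [← hc] at this
                omega
            have := hcl x₀ hx₀ v hv c this
            exact Finset.mem_insert_of_mem this
        refine ⟨main, ?_⟩
        -- lca b v = c
        refine (isLCA_eq hT ⟨(isAncestor_iff hT).2 hcb, (isAncestor_iff hT).2 hcv, ?_⟩).symm
        intro w hw1 hw2
        rw [isAncestor_iff hT] at hw1 hw2
        exact lca_max hT (anc_trans hT hw1 hba) hw2
      -- the new closed set
      refine ⟨insert a (insert b M'), ?_, ?_, ?_⟩
      · intro x hx
        rcases Finset.mem_cons.mp hx with h | h
        · subst h; exact Finset.mem_insert_self _ _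
        · exact Finset.mem_insert_of_mem (Finset.mem_insert_of_mem (hsub h))
      · -- closedness
        have handle : ∀ u ∈ insert a (insert b M'), ∀ v ∈ insert a (insert b M'),
            lca hT root u v ∈ insert a (insert b M') := by
          have lem : ∀ v ∈ insert a (insert b M'),
              lca hT root a v ∈ insert a (insert b M') := by
            intro v hv
            rcases Finset.mem_insert.mp hv with h | h
            · subst h; simp [lca_self hT]
            rcases Finset.mem_insert.mp h with h | h
            · subst h
              rw [lca_of_anc hT hba]
              simp
            · exact Finset.mem_insert_of_mem ((core v h).1)
          have lemb : ∀ v ∈ insert a (insert b M'),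
              lca hT root b v ∈ insert a (insert b M') := by
            intro v hv
            rcases Finset.mem_insert.mp hv with h | h
            · subst h
              rw [lca_comm hT, lca_of_anc hT hba]; simp
            rcases Finset.mem_insert.mp h with h | h
            · subst h; simp [lca_self hT]
            · rw [(core v h).2]
              exact Finset.mem_insert_of_mem ((core v h).1)
          intro u hu v hv
          rcases Finset.mem_insert.mp hu with h1 | h1
          · subst h1; exact lem v hv
          rcases Finset.mem_insert.mp h1 with h2 | h2
          · subst h2; exact lemb v hv
          rcases Finset.mem_insert.mp hv with h3 | h3
          · subst h3; rw [lca_comm hT]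
            exact lem u (Finset.mem_insert_of_mem (Finset.mem_insert_of_mem h2))
          rcases Finset.mem_insert.mp h3 with h4 | h4
          · subst h4; rw [lca_comm hT]
            exact lemb u (Finset.mem_insert_of_mem (Finset.mem_insert_of_mem h2))
          exact Finset.mem_insert_of_mem (Finset.mem_insert_of_mem
            (hcl u h2 v h4 _ (isLCA_lca hT root u v)))
        intro u hu v hv m hm
        rw [isLCA_eq hT hm]
        exact handle u hu v hv
      · -- cardinality
        have h1 : (insert a (insert b M')).card ≤ (insert b M').card + 1 :=
          Finset.card_insert_le _ _
        have h2 : (insert b M').card ≤ M'.card + 1 := Finset.card_insert_le _ _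
        rw [Finset.card_cons]
        omega
  -- now apply
  have hSfin : S.Finite := Set.toFinite S
  obtain ⟨M', hsub, hcl, hcard⟩ := key hSfin.toFinset (hSfin.toFinset_nonempty.mpr hS)
  have hMsub : M ⊆ ↑M' := by
    apply hmin
    · intro x hx
      exact hsub (hSfin.mem_toFinset.mpr hx)
    · intro u hu v hv m hm
      exact hcl u hu v hv m hm
  calc M.ncard ≤ (↑M' : Set V).ncard := Set.ncard_le_ncard hMsub (Set.toFinite _)
    _ = M'.card := Set.ncard_coe_finset _
    _ ≤ 2 * hSfin.toFinset.card := by omega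
    _ = 2 * S.ncard := by rw [Set.ncard_eq_toFinset_card S hSfin]
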